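/- arXiv:1510.05071 — 2 statements merged into one kernel-verified Lean document; each statement's English description precedes it below -/
import Mathlib

section
/- Let a, b ∈ ℝ≥0 satisfy a ≤ max{c, γ(b)} and b ≤ max{d, γ'(a)}, where γ, γ' are class-K functions such that γ ∘ γ' is a contraction (γ(γ'(s)) < s for all s > 0). Then a ≤ max{c, γ(d)} and b ≤ max{d, γ'(c)}. -/
open NNReal

/-- Small-gain argument for two interconnected subsystems: if
`a ≤ max{c, γ(b)}` and `b ≤ max{d, γ'(a)}` with `γ, γ'` class-K functions whose
composition is a contraction, then `a ≤ max{c, γ(d)}` and `b ≤ max{d, γ'(c)}`. -/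
theorem small_gain_two (a b c d : ℝ≥0) (γ γ' : ℝ≥0 → ℝ≥0)
    (hγcont : Continuous γ) (hγmono : StrictMono γ) (hγzero : γ 0 = 0)
    (hγ'cont : Continuous γ') (hγ'mono : StrictMono γ') (hγ'zero : γ' 0 = 0)
    (hcontr : ∀ s : ℝ≥0, 0 < s → γ (γ' s) < s)
    (ha : a ≤ max c (γ b)) (hb : b ≤ max d (γ' a)) :
    a ≤ max c (γ d) ∧ b ≤ max d (γ' c) := by
  have hcontr' : ∀ s : ℝ≥0, 0 < s → γ' (γ s) < s := by
    intro s hs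
    by_contra h
    push_neg at h
    have hγs : 0 < γ s := hγzero ▸ hγmono hs
    have := hcontr (γ s) hγs
    exact absurd (hγmono.monotone h) (not_le.mpr this)
  constructor
  · have h1 : a ≤ max c (γ (max d (γ' a))) :=
      ha.trans (max_le_max le_rfl (hγmono.monotone hb))
    by_contra h
    push_neg at h
    have ha0 : 0 < a := by
      rcases eq_or_lt_of_le (zero_le : 0 ≤ a) with h0 | h0
      · exact absurd (h0 ▸ zero_le) (not_le.mpr h)
      · exact h0
    rcases le_max_iff.mp h1 with h2 | h2
    · exact absurd (h2.trans (le_max_left _ _)) (not_le.mpr h)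
    · rcases le_total d (γ' a) with hd | hd
      · rw [max_eq_right hd] at h2
        exact absurd h2 (not_le.mpr (hcontr a ha0))
      · rw [max_eq_left hd] at h2
        exact absurd (h2.trans (le_max_right _ _)) (not_le.mpr h)
  · have h1 : b ≤ max d (γ' (max c (γ b))) :=
      hb.trans (max_le_max le_rfl (hγ'mono.monotone ha))
    by_contra h
    push_neg at h
    have hb0 : 0 < b := by
      rcases eq_or_lt_of_le (zero_le : 0 ≤ b) with h0 | h0
      · exact absurd (h0 ▸ zero_le) (not_le.mpr h)
      · exact h0
    rcases le_max_iff.mp h1 with h2 | h2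
    · exact absurd (h2.trans (le_max_left _ _)) (not_le.mpr h)
    · rcases le_total c (γ b) with hc | hc
      · rw [max_eq_right hc] at h2
        exact absurd h2 (not_le.mpr (hcontr' b hb0))
      · rw [max_eq_left hc] at h2
        exact absurd (h2.trans (le_max_right _ _)) (not_le.mpr h)
end

section
/- Let ψ ≠ 0 be a real scalar, J : [t₀,∞) → ℝ^m continuous, γ > 0 and B > 0 constants. Consider the componentwise dynamics ṫ_l(t) = ψ( j_l(t) − (‖J(t)‖ + γ)·sgn_α(ψ t_l(t)) ) where sgn_α(s) equals 1 if s ≥ α, −1 if s ≤ −α, and 0 if |s| < α, with α = B. If |ψ t_l(t₀)| ≤ B for all l, then |ψ t_l(t)| ≤ B for all t ≥ t₀ and all l. -/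
/-- The saturated sign function: `1` if `s ≥ α`, `-1` if `s ≤ -α`, `0` otherwise. -/
noncomputable def sgnα (α s : ℝ) : ℝ :=
  if α ≤ s then 1 else if s ≤ -α then -1 else 0

/-- Coordinate bound for the Euclidean norm. -/
lemma coord_abs_le_norm {m : ℕ} (x : EuclideanSpace ℝ (Fin m)) (l : Fin m) :
    |x l| ≤ ‖x‖ := by
  rw [EuclideanSpace.norm_eq]
  calc |x l| = Real.sqrt ((x l) ^ 2) := (Real.sqrt_sq_eq_abs _).symm
    _ ≤ Real.sqrt (∑ i, ‖x i‖ ^ 2) := by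
        apply Real.sqrt_le_sqrt
        have h : (x l) ^ 2 = ‖x l‖ ^ 2 := by simp [Real.norm_eq_abs, sq_abs]
        rw [h]
        exact Finset.single_le_sum (f := fun i => ‖x i‖ ^ 2) (fun i _ => sq_nonneg _) (Finset.mem_univ l)

/-- If `f` starts below `B` and has negative derivative whenever `f t ≥ B`,
then `f` stays below `B`. -/
lemma stays_below (f h : ℝ → ℝ) (t₀ B : ℝ)
    (hf : ∀ t, t₀ ≤ t → HasDerivAt f (h t) t)
    (hneg : ∀ t, t₀ ≤ t → B ≤ f t → h t < 0)
    (h0 : f t₀ ≤ B) : ∀ t, t₀ ≤ t → f t ≤ B := by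
  by_contra hc
  push_neg at hc
  obtain ⟨t₁, ht₁, hft₁⟩ := hc
  have hcont : ∀ t ∈ Set.Icc t₀ t₁, ContinuousAt f t := fun t ht =>
    (hf t ht.1).continuousAt
  set S : Set ℝ := {t ∈ Set.Icc t₀ t₁ | f t ≤ B} with hS
  have hne : S.Nonempty := ⟨t₀, ⟨le_refl _, ht₁⟩, h0⟩
  have hbdd : BddAbove S := ⟨t₁, fun x hx => hx.1.2⟩
  set s := sSup S with hsdef
  have hSclosed : IsClosed S := by
    have heq : S = Set.Icc t₀ t₁ ∩ f ⁻¹' Set.Iic B := by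
      ext x; simp [hS, Set.mem_Icc, and_assoc]
    rw [heq]
    have hfc : ContinuousOn f (Set.Icc t₀ t₁) := fun x hx => (hcont x hx).continuousWithinAt
    exact hfc.preimage_isClosed_of_isClosed isClosed_Icc isClosed_Iic
  have hsS : s ∈ S := hSclosed.csSup_mem hne hbdd
  have hfs_le : f s ≤ B := hsS.2
  have hst₀ : t₀ ≤ s := hsS.1.1
  have hst₁ : s ≤ t₁ := hsS.1.2
  have hs_ne : s ≠ t₁ := by
    intro h; rw [h] at hfs_le; linarith
  have hs_lt : s < t₁ := lt_of_le_of_ne hst₁ hs_ne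
  have hgt : ∀ t, s < t → t ≤ t₁ → B < f t := by
    intro t hst htt₁
    by_contra hle
    push_neg at hle
    have : t ∈ S := ⟨⟨hst₀.trans hst.le, htt₁⟩, hle⟩
    exact absurd (le_csSup hbdd this) (not_le.mpr hst)
  have hfsB : f s = B := by
    refine le_antisymm hfs_le ?_
    have hc : ContinuousWithinAt f (Set.Ioi s) s :=
      (hcont s ⟨hst₀, hst₁⟩).continuousWithinAt
    have hev : ∀ᶠ t in nhdsWithin s (Set.Ioi s), B ≤ f t := by
      filter_upwards [Icc_mem_nhdsGT_of_mem ⟨le_refl s, hs_lt⟩, self_mem_nhdsWithin]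
        with t ht ht'
      exact (hgt t ht' ht.2).le
    exact ge_of_tendsto hc hev
  have hds : h s < 0 := hneg s hst₀ hfsB.ge
  have hdw : HasDerivWithinAt f (h s) (Set.Ioi s) s :=
    (hf s hst₀).hasDerivWithinAt
  rw [hasDerivWithinAt_iff_tendsto_slope] at hdw
  have hdiff : Set.Ioi s \ {s} = Set.Ioi s :=
    Set.diff_singleton_eq_self (by simp)
  rw [hdiff] at hdw
  have hev : ∀ᶠ t in nhdsWithin s (Set.Ioi s), 0 ≤ slope f s t := by
    have hmem : Set.Ioc s t₁ ∈ nhdsWithin s (Set.Ioi s) :=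
      Ioc_mem_nhdsGT_of_mem ⟨le_refl s, hs_lt⟩
    filter_upwards [hmem] with t ht
    have h1 : B < f t := hgt t ht.1 ht.2
    have h2 : 0 < t - s := sub_pos.mpr ht.1
    rw [slope_def_field]
    have h3 : 0 < f t - f s := by rw [hfsB]; linarith
    have : (f t - f s) / (t - s) = (f t - f s) * (t - s)⁻¹ := div_eq_mul_inv _ _
    rw [div_eq_mul_inv]
    positivity
  have : (0 : ℝ) ≤ h s := ge_of_tendsto hdw hev
  linarith

/-- Forward invariance of the box `{|ψ t_l| ≤ B}` for the projected adaptive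
parameter estimator dynamics
`ṫ_l = ψ( j_l(t) − (‖J(t)‖ + γ)·sgn_B(ψ t_l(t)) )`. -/
theorem projected_estimator_invariant (m : ℕ) (ψ γ B t₀ : ℝ)
    (hψ : ψ ≠ 0) (hγ : 0 < γ) (hB : 0 < B)
    (J : ℝ → EuclideanSpace ℝ (Fin m)) (hJ : Continuous J)
    (T : ℝ → Fin m → ℝ)
    (hdyn : ∀ (l : Fin m) (t : ℝ), t₀ ≤ t →
      HasDerivAt (fun s => T s l)
        (ψ * (J t l - (‖J t‖ + γ) * sgnα B (ψ * T t l))) t)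
    (hinit : ∀ l, |ψ * T t₀ l| ≤ B) :
    ∀ t, t₀ ≤ t → ∀ l, |ψ * T t l| ≤ B := by
  intro t ht l
  have hψ2 : 0 < ψ * ψ := mul_self_pos.mpr hψ
  set f : ℝ → ℝ := fun s => ψ * T s l with hfdef
  set h : ℝ → ℝ :=
    fun s => ψ * (ψ * (J s l - (‖J s‖ + γ) * sgnα B (ψ * T s l))) with hhdef
  have hfd : ∀ s, t₀ ≤ s → HasDerivAt f (h s) s := fun s hs =>
    (hdyn l s hs).const_mul ψ
  have hjle : ∀ s, |J s l| ≤ ‖J s‖ := fun s => coord_abs_le_norm (J s) l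
  -- upper bound
  have hupper : ∀ u, t₀ ≤ u → f u ≤ B := by
    apply stays_below f h t₀ B hfd _ (show ψ * T t₀ l ≤ B from (abs_le.mp (hinit l)).2)
    intro s hs hBf
    have hsgn : sgnα B (ψ * T s l) = 1 := by
      simp only [sgnα, if_pos (show B ≤ ψ * T s l from hBf)]
    have hj := abs_le.mp (hjle s)
    rw [hhdef]
    simp only [hsgn, mul_one]
    have : J s l - (‖J s‖ + γ) ≤ -γ := by linarith [hj.2]
    nlinarith
  -- lower bound
  have hlower : ∀ u, t₀ ≤ u → -f u ≤ B := by
    apply stays_below (fun s => -f s) (fun s => -h s) t₀ B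
      (fun s hs => (hfd s hs).neg) _ (show -(ψ * T t₀ l) ≤ B by linarith [(abs_le.mp (hinit l)).1])
    intro s hs hBf
    have hfle : ψ * T s l ≤ -B := by
      simp only [hfdef] at hBf ⊢; linarith
    have hsgn : sgnα B (ψ * T s l) = -1 := by
      have h1 : ¬ B ≤ ψ * T s l := by linarith
      simp only [sgnα, if_neg h1, if_pos hfle]
    have hj := abs_le.mp (hjle s)
    show -h s < 0
    rw [hhdef]
    simp only [hsgn, mul_neg_one]
    have : γ ≤ J s l + (‖J s‖ + γ) := by linarith [hj.1]
    nlinarith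
  have h1 : -(ψ * T t l) ≤ B := hlower t ht
  have h2 : ψ * T t l ≤ B := hupper t ht
  exact abs_le.mpr ⟨by linarith, h2⟩
end
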